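/- Let ψ : X1 → X2 be a spectral map of spectral spaces, let φ1 : X1 → 𝒳(X1), φ2 : X2 → 𝒳(X2) be the canonical embeddings x ↦ {x}^gen, and let 𝒳(ψ) : 𝒳(X1) → 𝒳(X2) be the map C ↦ ψ(C)^gen. If Ψ : 𝒳(X1) → 𝒳(X2) is any spectral map satisfying Ψ ∘ φ1 = φ2 ∘ ψ, then 𝒳(ψ)(C) ⊆ Ψ(C) for every C ∈ 𝒳(X1). -/
import Mathlib


open Set TopologicalSpace Topology

/-- A subset of a topological space is *inverse-closed* if it is an intersection of a
family of quasi-compact open subsets. -/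
def InvClosed {X : Type*} [TopologicalSpace X] (Y : Set X) : Prop :=
  ∃ 𝒪 : Set (Set X), (∀ U ∈ 𝒪, IsOpen U ∧ IsCompact U) ∧ Y = ⋂₀ 𝒪

/-- A subset is *saturated* if it is an intersection of open sets. -/
def IsSatd {X : Type*} [TopologicalSpace X] (Y : Set X) : Prop :=
  ∃ 𝒪 : Set (Set X), (∀ U ∈ 𝒪, IsOpen U) ∧ Y = ⋂₀ 𝒪

/-- A topological space is *spectral* if it is T0, quasi-compact, sober, and the
quasi-compact open subsets form a basis closed under finite intersections. -/
def IsSpectralSpace (X : Type*) [TopologicalSpace X] : Prop :=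
  T0Space X ∧ CompactSpace X ∧ QuasiSober X ∧
    IsTopologicalBasis {U : Set X | IsOpen U ∧ IsCompact U} ∧
    ∀ U V : Set X, IsOpen U → IsCompact U → IsOpen V → IsCompact V → IsCompact (U ∩ V)

/-- `𝒳(X)`: the nonempty inverse-closed subsets of `X`. -/
abbrev XCal (X : Type*) [TopologicalSpace X] : Type _ :=
  {Y : Set X // Y.Nonempty ∧ InvClosed Y}

/-- The Zariski topology on `𝒳(X)`, with basic open sets `𝒰(Ω) = {Y : Y ⊆ Ω}` for `Ω`
quasi-compact open in `X`. -/
instance XCal.instTop (X : Type*) [TopologicalSpace X] : TopologicalSpace (XCal X) :=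
  generateFrom {S : Set (XCal X) | ∃ Ω : Set X, IsOpen Ω ∧ IsCompact Ω ∧
    S = {Y : XCal X | (Y : Set X) ⊆ Ω}}

/-- The specialization-type order: `x ≤ y` iff `y ∈ closure {x}`. -/
def spord {X : Type*} [TopologicalSpace X] (x y : X) : Prop := y ∈ closure {x}

/-- Closure under generizations of a set `S`: all points `z ≤ s` for some `s ∈ S`. -/
def genOf {X : Type*} [TopologicalSpace X] (S : Set X) : Set X :=
  {z : X | ∃ s ∈ S, spord z s}

/-- A map is *spectral* if preimages of quasi-compact open sets are quasi-compact open. -/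
def SpecMap {X Y : Type*} [TopologicalSpace X] [TopologicalSpace Y] (f : X → Y) : Prop :=
  ∀ Ω : Set Y, IsOpen Ω → IsCompact Ω → IsOpen (f ⁻¹' Ω) ∧ IsCompact (f ⁻¹' Ω)

/-- The constructible topology on a spectral space: generated by the quasi-compact open
sets together with their complements. -/
def constructibleTop (X : Type*) [TopologicalSpace X] : TopologicalSpace X :=
  generateFrom ({U : Set X | IsOpen U ∧ IsCompact U} ∪
    {S : Set X | ∃ U : Set X, IsOpen U ∧ IsCompact U ∧ S = Uᶜ})

/-- `s` is the supremum of `S` for the order induced by the topology. -/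
def IsSupOf {X : Type*} [TopologicalSpace X] (S : Set X) (s : X) : Prop :=
  (∀ c ∈ S, spord c s) ∧ ∀ t : X, (∀ c ∈ S, spord c t) → spord s t

/-- A map is sup-preserving if it sends existing finite suprema to suprema. -/
def SupPreserving {X Y : Type*} [TopologicalSpace X] [TopologicalSpace Y] (f : X → Y) : Prop :=
  ∀ F : Set X, F.Finite → ∀ s : X, IsSupOf F s → IsSupOf (f '' F) (f s)

/-- A map is open onto its image. -/
def OpenOntoImage {X Y : Type*} [TopologicalSpace X] [TopologicalSpace Y] (f : X → Y) : Prop :=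
  ∀ V : Set X, IsOpen V → ∃ W : Set Y, IsOpen W ∧ f '' V = W ∩ Set.range f


section Aux13

open TopologicalSpace

variable {X : Type*} [TopologicalSpace X]

/-- Inverse-closed sets are closed under generization. -/
lemma invClosed_gen' {Y : Set X} (hY : InvClosed Y) {z s : X} (hzs : spord z s)
    (hs : s ∈ Y) : z ∈ Y := by
  obtain ⟨𝒪, h𝒪, rfl⟩ := hY
  intro U hU
  obtain ⟨w, hwU, hw⟩ := mem_closure_iff.mp hzs U (h𝒪 U hU).1 (hs U hU)
  rwa [show w = z from hw] at hwU

lemma spord_refl (x : X) : spord x x := subset_closure rfl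

/-- In a spectral space, the generization closure of a singleton is inverse-closed. -/
lemma genOf_singleton_invClosed (hX : IsSpectralSpace X) (c : X) :
    InvClosed (genOf ({c} : Set X)) := by
  refine ⟨{U : Set X | IsOpen U ∧ IsCompact U ∧ c ∈ U}, fun U hU => ⟨hU.1, hU.2.1⟩, ?_⟩
  ext z
  constructor
  · rintro ⟨s, hs, hsp⟩ U hU
    rcases hs with rfl
    obtain ⟨w, hwU, hw⟩ := mem_closure_iff.mp hsp U hU.1 hU.2.2
    rwa [show w = z from hw] at hwU
  · intro hz
    refine ⟨c, rfl, ?_⟩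
    show c ∈ closure {z}
    rw [mem_closure_iff]
    intro O hO hcO
    obtain ⟨U, hUmem, hcU, hUO⟩ := hX.2.2.2.1.exists_subset_of_mem_open hcO hO
    exact ⟨z, hUO (hz U ⟨hUmem.1, hUmem.2, hcU⟩), rfl⟩

lemma mem_genOf_self (c : X) : c ∈ genOf ({c} : Set X) := ⟨c, rfl, spord_refl c⟩

/-- Basic open subsets of `𝒳(X)`. -/
lemma XCal.isOpen_basic {Ω : Set X} (hΩo : IsOpen Ω) (hΩc : IsCompact Ω) :
    IsOpen {Y : XCal X | (Y : Set X) ⊆ Ω} :=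
  TopologicalSpace.isOpen_generateFrom_of_mem ⟨Ω, hΩo, hΩc, rfl⟩

/-- Every open subset of `𝒳(X)` is downward closed for inclusion. -/
lemma XCal.open_downClosed {O : Set (XCal X)} (hO : IsOpen O) :
    ∀ A B : XCal X, (A : Set X) ⊆ (B : Set X) → B ∈ O → A ∈ O := by
  have h : TopologicalSpace.GenerateOpen {S : Set (XCal X) | ∃ Ω : Set X, IsOpen Ω ∧
      IsCompact Ω ∧ S = {Y : XCal X | (Y : Set X) ⊆ Ω}} O := hO
  clear hO
  induction h with
  | basic S hS =>
      obtain ⟨Ω, _, _, rfl⟩ := hS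
      exact fun A B hAB hB => hAB.trans hB
  | univ => exact fun A B _ _ => trivial
  | inter _ _ _ _ ihS ihT => exact fun A B hAB hB => ⟨ihS A B hAB hB.1, ihT A B hAB hB.2⟩
  | sUnion 𝒮 h ih => rintro A B hAB ⟨S, hS, hB⟩; exact ⟨S, hS, ih S hS A B hAB hB⟩

/-- Inclusion implies specialization in `𝒳(X)`. -/
lemma XCal.spord_of_subset {A B : XCal X} (h : (A : Set X) ⊆ (B : Set X)) :
    spord A B := by
  rw [spord, mem_closure_iff]
  intro O hO hBO
  exact ⟨A, XCal.open_downClosed hO A B h hBO, rfl⟩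

/-- Specialization implies inclusion in `𝒳(X)`. -/
lemma XCal.subset_of_spord {A B : XCal X} (h : spord A B) :
    (A : Set X) ⊆ (B : Set X) := by
  intro x hxA
  by_contra hxB
  obtain ⟨𝒪, h𝒪, hB⟩ := B.2.2
  have : ¬ x ∈ ⋂₀ 𝒪 := by rw [← hB]; exact hxB
  obtain ⟨Ω, hΩ𝒪, hxΩ⟩ := by simpa [Set.mem_sInter] using this
  have hBΩ : (B : Set X) ⊆ Ω := hB ▸ Set.sInter_subset_of_mem hΩ𝒪
  obtain ⟨A', hA', hAeq⟩ := mem_closure_iff.mp h _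
    (XCal.isOpen_basic (h𝒪 Ω hΩ𝒪).1 (h𝒪 Ω hΩ𝒪).2) hBΩ
  have : (A : Set X) ⊆ Ω := by rwa [show A' = A from hAeq] at hA'
  exact hxΩ (this hxA)

/-- The basic open sets `𝒰(Ω)` of `𝒳(X)` are quasi-compact (for `X` spectral). -/
lemma XCal.isCompact_basic (hX : IsSpectralSpace X) {Ω : Set X}
    (hΩo : IsOpen Ω) (hΩc : IsCompact Ω) :
    IsCompact {Y : XCal X | (Y : Set X) ⊆ Ω} := by
  classical
  have hbasis : IsTopologicalBasis {S : Set (XCal X) | ∃ Ω' : Set X, IsOpen Ω' ∧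
      IsCompact Ω' ∧ S = {Y : XCal X | (Y : Set X) ⊆ Ω'}} := by
    refine ⟨?_, ?_, rfl⟩
    · rintro S₁ ⟨Ω₁, hΩ₁o, hΩ₁c, rfl⟩ S₂ ⟨Ω₂, hΩ₂o, hΩ₂c, rfl⟩ Y hY
      refine ⟨{Z : XCal X | (Z : Set X) ⊆ Ω₁ ∩ Ω₂},
        ⟨Ω₁ ∩ Ω₂, hΩ₁o.inter hΩ₂o, hX.2.2.2.2 _ _ hΩ₁o hΩ₁c hΩ₂o hΩ₂c, rfl⟩,
        Set.subset_inter hY.1 hY.2, ?_⟩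
      exact fun Z hZ => ⟨hZ.trans Set.inter_subset_left, hZ.trans Set.inter_subset_right⟩
    · refine Set.eq_univ_of_forall fun Y => ?_
      refine Set.mem_sUnion.mpr ⟨{Z : XCal X | (Z : Set X) ⊆ Set.univ},
        ⟨Set.univ, isOpen_univ, hX.2.1.isCompact_univ, rfl⟩, fun _ _ => trivial⟩
  refine isCompact_of_finite_subcover fun {ι} U hU hcov => ?_
  rcases Set.eq_empty_or_nonempty Ω with rfl | hΩne
  · refine ⟨∅, fun Y hY => absurd (Set.subset_empty_iff.mp hY) ?_⟩
    simpa using Y.2.1.ne_empty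
  · set Ωelt : XCal X := ⟨Ω, hΩne, ⟨{Ω}, by simpa using ⟨hΩo, hΩc⟩, by simp⟩⟩ with hΩelt
    have hΩmem : Ωelt ∈ {Y : XCal X | (Y : Set X) ⊆ Ω} := fun _ h => h
    obtain ⟨j, hj⟩ := Set.mem_iUnion.mp (hcov hΩmem)
    obtain ⟨S, hS, hΩS, hSU⟩ := hbasis.exists_subset_of_mem_open hj (hU j)
    obtain ⟨Ω', hΩ'o, hΩ'c, rfl⟩ := hS
    refine ⟨{j}, fun Y hY => ?_⟩
    simp only [Set.mem_iUnion]
    exact ⟨j, Finset.mem_singleton_self j, hSU (fun x hx => hΩS (hY hx))⟩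

end Aux13

/-- If `Ψ : 𝒳(X₁) → 𝒳(X₂)` is any spectral map with
`Ψ ∘ φ₁ = φ₂ ∘ ψ`, then `𝒳(ψ)(C) = ψ(C)^gen ⊆ Ψ(C)` for every `C ∈ 𝒳(X₁)`. -/
theorem stmt13 {X₁ X₂ : Type*} [TopologicalSpace X₁] [TopologicalSpace X₂]
    (hX₁ : IsSpectralSpace X₁) (hX₂ : IsSpectralSpace X₂)
    (ψ : X₁ → X₂) (hψ : SpecMap ψ)
    (Ψ : XCal X₁ → XCal X₂) (hΨ : SpecMap Ψ)
    (hcomm : ∀ (x : X₁) (C : XCal X₁),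
      (C : Set X₁) = genOf {x} → (Ψ C : Set X₂) = genOf {ψ x}) :
    ∀ C : XCal X₁, genOf (ψ '' (C : Set X₁)) ⊆ (Ψ C : Set X₂) := fun C z hz => by
  classical
  obtain ⟨y, hy, hzy⟩ := hz
  obtain ⟨c, hcC, rfl⟩ := hy
  -- the element `{c}^gen` of `𝒳(X₁)`
  set D : XCal X₁ := ⟨genOf ({c} : Set X₁), ⟨c, mem_genOf_self c⟩,
    genOf_singleton_invClosed hX₁ c⟩ with hD
  have hΨD : (Ψ D : Set X₂) = genOf ({ψ c} : Set X₂) := hcomm c D rfl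
  -- `D ⊆ C`
  have hDC : (D : Set X₁) ⊆ (C : Set X₁) := by
    rintro z' ⟨s, hs, hsp⟩
    rcases hs with rfl
    exact invClosed_gen' C.2.2 hsp hcC
  -- `Ψ` is continuous
  have hcont : Continuous Ψ := by
    rw [continuous_generateFrom_iff]
    rintro S ⟨Ω, hΩo, hΩc, rfl⟩
    exact (hΨ _ (XCal.isOpen_basic hΩo hΩc) (XCal.isCompact_basic hX₂ hΩo hΩc)).1
  -- monotonicity via specialization
  have hspord : spord (Ψ D) (Ψ C) := by
    have h1 : spord D C := XCal.spord_of_subset hDC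
    have h2 : Ψ C ∈ closure (Ψ '' {D}) :=
      image_closure_subset_closure_image hcont ⟨C, h1, rfl⟩
    simpa [spord, Set.image_singleton] using h2
  have hsub : (Ψ D : Set X₂) ⊆ (Ψ C : Set X₂) := XCal.subset_of_spord hspord
  have hψc : ψ c ∈ (Ψ C : Set X₂) := hsub (hΨD ▸ mem_genOf_self (ψ c))
  exact invClosed_gen' (Ψ C).2.2 hzy hψc
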